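/- Regret of SMART with deterministic threshold: in the general online learning setting with 0 ≤ ℓ_t(a) ≤ 1 for all t and a, let g : ℕ → ℝ be monotone nondecreasing with g(k) ≥ 0 for all k. Set θ := g(n) and t_sw := min{1 ≤ t ≤ n−1 : Σ_t > θ}, with t_sw := n if no such t exists. Let (a_1, …, a_n) satisfy a_t = a*_{t−1} for all t ≤ t_sw, and, in case t_sw < n, assume the post-switch actions satisfy the worst-case guarantee ∑_{t=t_sw+1}^n ℓ_t(a_t) − inf_{a∈A} ∑_{t=t_sw+1}^n ℓ_t(a) ≤ g(n − t_sw). Then Reg ≤ 2·min{Σ_n, g(n)} + 1. -/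

import Mathlib

/-- **Regret of SMART with deterministic threshold.** In the general online learning
setting with losses in `[0,1]`, let `g : ℕ → ℝ` be monotone nondecreasing and
nonnegative, set `θ = g n`, and let `tsw` be the first `1 ≤ t ≤ n-1` with `Sg t > g n`
(`tsw = n` if no such `t` exists), where `Sg` is the anytime FTL regret.  If the action
sequence plays FTL up to round `tsw` and, in case `tsw < n`, the post-switch play has
regret at most `g (n - tsw)` on rounds `tsw+1, …, n`, then the total regret is at most
`2 · min (Sg n) (g n) + 1`. -/
theorem smart_deterministic_threshold_regret
    {A : Type*} [Nonempty A] (n : ℕ) (hn : 1 ≤ n)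
    (ℓ : ℕ → A → ℝ)
    (hℓ : ∀ t ∈ Finset.Icc 1 n, ∀ a : A, ℓ t a ∈ Set.Icc (0 : ℝ) 1)
    (astar : ℕ → A)
    (hmin : ∀ t ∈ Finset.Icc 1 n, ∀ a : A,
      ∑ i ∈ Finset.Icc 1 t, ℓ i (astar t) ≤ ∑ i ∈ Finset.Icc 1 t, ℓ i a)
    (Sg : ℕ → ℝ)
    (hSg : ∀ t, Sg t = ∑ i ∈ Finset.Icc 1 t,
        ((∑ j ∈ Finset.Icc 1 i, ℓ j (astar (i - 1))) - ∑ j ∈ Finset.Icc 1 i, ℓ j (astar i)))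
    (g : ℕ → ℝ) (hgmono : Monotone g) (hg0 : ∀ k, 0 ≤ g k)
    (tsw : ℕ) (htsw1 : 1 ≤ tsw) (htsw2 : tsw ≤ n)
    (htsw3 : ∀ t, 1 ≤ t → t < tsw → Sg t ≤ g n)
    (htsw4 : tsw < n → g n < Sg tsw)
    (a : ℕ → A) (ha : ∀ t ∈ Finset.Icc 1 tsw, a t = astar (t - 1))
    (hwc : tsw < n →
      (∑ t ∈ Finset.Icc (tsw + 1) n, ℓ t (a t))
          - (⨅ a' : A, ∑ t ∈ Finset.Icc (tsw + 1) n, ℓ t a')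
        ≤ g (n - tsw)) :
    (∑ t ∈ Finset.Icc 1 n, ℓ t (a t)) - ∑ i ∈ Finset.Icc 1 n, ℓ i (astar n)
      ≤ 2 * min (Sg n) (g n) + 1 := by
  classical
  set d : ℕ → ℝ := fun i =>
    (∑ j ∈ Finset.Icc 1 i, ℓ j (astar (i - 1))) - ∑ j ∈ Finset.Icc 1 i, ℓ j (astar i) with hd
  have hSg' : ∀ t, Sg t = ∑ i ∈ Finset.Icc 1 t, d i := hSg
  -- losses in [0,1]
  have hℓ0 : ∀ t, 1 ≤ t → t ≤ n → ∀ a' : A, 0 ≤ ℓ t a' := fun t h1 h2 a' =>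
    (hℓ t (Finset.mem_Icc.2 ⟨h1, h2⟩) a').1
  have hℓ1 : ∀ t, 1 ≤ t → t ≤ n → ∀ a' : A, ℓ t a' ≤ 1 := fun t h1 h2 a' =>
    (hℓ t (Finset.mem_Icc.2 ⟨h1, h2⟩) a').2
  -- d is nonnegative on [1, n]
  have hd0 : ∀ i, 1 ≤ i → i ≤ n → 0 ≤ d i := by
    intro i h1 h2
    have := hmin i (Finset.mem_Icc.2 ⟨h1, h2⟩) (astar (i - 1))
    simp only [hd]
    linarith
  -- d is at most 1 on [1, n]
  have hd1 : ∀ i, 1 ≤ i → i ≤ n → d i ≤ 1 := by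
    intro i h1 h2
    obtain ⟨k, rfl⟩ : ∃ k, i = k + 1 := ⟨i - 1, by omega⟩
    have hmink : ∑ j ∈ Finset.Icc 1 k, ℓ j (astar k) ≤ ∑ j ∈ Finset.Icc 1 k, ℓ j (astar (k+1)) := by
      rcases Nat.eq_zero_or_pos k with hk | hk
      · subst hk; simp
      · exact hmin k (Finset.mem_Icc.2 ⟨hk, by omega⟩) (astar (k+1))
    have e1 : ∑ j ∈ Finset.Icc 1 (k+1), ℓ j (astar k)
        = ∑ j ∈ Finset.Icc 1 k, ℓ j (astar k) + ℓ (k+1) (astar k) :=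
      Finset.sum_Icc_succ_top (Nat.le_add_left 1 k) _
    have e2 : ∑ j ∈ Finset.Icc 1 (k+1), ℓ j (astar (k+1))
        = ∑ j ∈ Finset.Icc 1 k, ℓ j (astar (k+1)) + ℓ (k+1) (astar (k+1)) :=
      Finset.sum_Icc_succ_top (Nat.le_add_left 1 k) _
    have h3 := hℓ1 (k+1) h1 h2 (astar k)
    have h4 := hℓ0 (k+1) h1 h2 (astar (k+1))
    simp only [hd, Nat.add_sub_cancel]
    rw [e1, e2]
    linarith
  -- FTL regret decomposition
  have hdecomp : ∀ m, (∑ t ∈ Finset.Icc 1 m, ℓ t (astar (t - 1)))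
      = Sg m + ∑ j ∈ Finset.Icc 1 m, ℓ j (astar m) := by
    intro m
    induction m with
    | zero => simp [hSg']
    | succ k ih =>
      have h1 : (1:ℕ) ≤ k + 1 := Nat.le_add_left 1 k
      rw [Finset.sum_Icc_succ_top h1, Finset.sum_Icc_succ_top h1, ih,
        hSg' (k+1), Finset.sum_Icc_succ_top h1, ← hSg' k]
      simp only [hd, Nat.add_sub_cancel]
      have e1 : ∑ j ∈ Finset.Icc 1 (k+1), ℓ j (astar k)
          = ∑ j ∈ Finset.Icc 1 k, ℓ j (astar k) + ℓ (k+1) (astar k) :=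
        Finset.sum_Icc_succ_top h1 _
      have e2 : ∑ j ∈ Finset.Icc 1 (k+1), ℓ j (astar (k+1))
          = ∑ j ∈ Finset.Icc 1 k, ℓ j (astar (k+1)) + ℓ (k+1) (astar (k+1)) :=
        Finset.sum_Icc_succ_top h1 _
      rw [e1, e2]
      ring
  -- splitting sums at tsw
  have hIccIoc : ∀ m : ℕ, Finset.Icc 1 m = Finset.Ioc 0 m := by
    intro m; ext x; simp [Finset.mem_Icc, Finset.mem_Ioc]; omega
  have hsplit : ∀ f : ℕ → ℝ,
      (∑ t ∈ Finset.Icc 1 tsw, f t) + ∑ t ∈ Finset.Icc (tsw+1) n, f t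
        = ∑ t ∈ Finset.Icc 1 n, f t := by
    intro f
    rw [hIccIoc, hIccIoc, Finset.Icc_add_one_left_eq_Ioc]
    exact Finset.sum_Ioc_consecutive f (Nat.zero_le tsw) htsw2
  -- Sg tsw ≤ Sg n
  have hSgmono : Sg tsw ≤ Sg n := by
    rw [hSg' tsw, hSg' n, ← hsplit d]
    have : 0 ≤ ∑ t ∈ Finset.Icc (tsw+1) n, d t := by
      refine Finset.sum_nonneg fun t ht => ?_
      rw [Finset.mem_Icc] at ht
      exact hd0 t (by omega) ht.2
    linarith
  -- Sg n ≥ 0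
  have hSgn0 : 0 ≤ Sg n := by
    rw [hSg' n]
    refine Finset.sum_nonneg fun t ht => ?_
    rw [Finset.mem_Icc] at ht
    exact hd0 t ht.1 ht.2
  -- Sg tsw ≤ g n + 1
  have hSgtsw : Sg tsw ≤ g n + 1 := by
    obtain ⟨k, rfl⟩ : ∃ k, tsw = k + 1 := ⟨tsw - 1, by omega⟩
    have h1 : (1:ℕ) ≤ k + 1 := Nat.le_add_left 1 k
    rw [hSg' (k+1), Finset.sum_Icc_succ_top h1, ← hSg' k]
    have hdk : d (k+1) ≤ 1 := hd1 (k+1) h1 htsw2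
    rcases Nat.eq_zero_or_pos k with hk | hk
    · subst hk
      rw [hSg' 0]
      simp only [Finset.Icc_self, Finset.Icc_eq_empty_of_lt (by norm_num : (1:ℕ) > 0)]
      have := hg0 n
      simp
      linarith
    · have := htsw3 k hk (by omega)
      linarith
  rcases eq_or_lt_of_le htsw2 with heq | hlt
  · -- tsw = n: pure FTL
    subst heq
    have e : ∑ t ∈ Finset.Icc 1 tsw, ℓ t (a t) = ∑ t ∈ Finset.Icc 1 tsw, ℓ t (astar (t - 1)) :=
      Finset.sum_congr rfl fun t ht => by rw [ha t ht]
    rw [e, hdecomp tsw]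
    have hmin1 : Sg tsw ≤ min (Sg tsw) (g tsw) + 1 := by
      rw [← min_add_add_right]
      exact le_min (by linarith) hSgtsw
    have : 0 ≤ min (Sg tsw) (g tsw) := le_min hSgn0 (hg0 tsw)
    linarith
  · -- tsw < n: switch happened
    have hmineq : min (Sg n) (g n) = g n :=
      min_eq_right (le_of_lt (lt_of_lt_of_le (htsw4 hlt) hSgmono))
    -- first block
    have e : ∑ t ∈ Finset.Icc 1 tsw, ℓ t (a t) = ∑ t ∈ Finset.Icc 1 tsw, ℓ t (astar (t - 1)) :=
      Finset.sum_congr rfl fun t ht => by rw [ha t ht]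
    have h1 : ∑ t ∈ Finset.Icc 1 tsw, ℓ t (a t)
        = Sg tsw + ∑ j ∈ Finset.Icc 1 tsw, ℓ j (astar tsw) := by rw [e, hdecomp tsw]
    have h2 : ∑ j ∈ Finset.Icc 1 tsw, ℓ j (astar tsw) ≤ ∑ j ∈ Finset.Icc 1 tsw, ℓ j (astar n) :=
      hmin tsw (Finset.mem_Icc.2 ⟨htsw1, htsw2⟩) (astar n)
    -- second block
    have hbdd : BddBelow (Set.range fun a' : A => ∑ t ∈ Finset.Icc (tsw+1) n, ℓ t a') := by
      refine ⟨0, ?_⟩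
      rintro x ⟨a', rfl⟩
      refine Finset.sum_nonneg fun t ht => ?_
      rw [Finset.mem_Icc] at ht
      exact hℓ0 t (by omega) ht.2 a'
    have hinf : (⨅ a' : A, ∑ t ∈ Finset.Icc (tsw+1) n, ℓ t a')
        ≤ ∑ t ∈ Finset.Icc (tsw+1) n, ℓ t (astar n) := ciInf_le hbdd (astar n)
    have h3 : ∑ t ∈ Finset.Icc (tsw+1) n, ℓ t (a t)
        ≤ ∑ t ∈ Finset.Icc (tsw+1) n, ℓ t (astar n) + g (n - tsw) := by
      have := hwc hlt
      linarith
    have hsplit1 := hsplit (fun t => ℓ t (a t))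
    have hsplit2 := hsplit (fun t => ℓ t (astar n))
    have hgm : g (n - tsw) ≤ g n := hgmono (Nat.sub_le n tsw)
    rw [hmineq]
    linarith
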